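/- For a three-qubit pure state |ψ⟩ = α₀|000⟩ + α₁e^{iθ}|100⟩ + α₂|101⟩ + α₃|110⟩ + α₄|111⟩ with α₀,…,α₄ ≥ 0, Σᵢ αᵢ² = 1 and θ ∈ [0,π], the exact identity S₁₂² + S₁₃² + τ₂₃² = 3 − (2α₀² − 1)² − 4α₀²α₁² − 4(α₁α₄ − α₂α₃)² − 8α₁α₂α₃α₄(1 − cosθ) holds; consequently S₁₂² + S₁₃² + [3f(ρ₂₃) − 2]² ≤ 3, and by symmetry S₁₂² + S₂₃² + [3f(ρ₁₃) − 2]² ≤ 3 and S₁₃² + S₂₃² + [3f(ρ₁₂) − 2]² ≤ 3. -/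
import Mathlib


/-- Squared steering observable S₁₂² of the reduced state ρ₁₂ of the three-qubit
pure state α₀|000⟩ + α₁e^{iθ}|100⟩ + α₂|101⟩ + α₃|110⟩ + α₄|111⟩. -/
noncomputable def S12sq (a0 a1 a2 a3 a4 θ : ℝ) : ℝ :=
  1 + 8 * a0 ^ 2 * a3 ^ 2 - 4 * a0 ^ 2 * a2 ^ 2 - 4 * a1 ^ 2 * a4 ^ 2
    - 4 * a2 ^ 2 * a3 ^ 2 + 8 * a1 * a2 * a3 * a4 * Real.cos θ

/-- Squared steering observable S₁₃² of the reduced state ρ₁₃. -/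
noncomputable def S13sq (a0 a1 a2 a3 a4 θ : ℝ) : ℝ :=
  1 + 8 * a0 ^ 2 * a2 ^ 2 - 4 * a0 ^ 2 * a3 ^ 2 - 4 * a1 ^ 2 * a4 ^ 2
    - 4 * a2 ^ 2 * a3 ^ 2 + 8 * a1 * a2 * a3 * a4 * Real.cos θ

/-- Squared steering observable S₂₃² of the reduced state ρ₂₃. -/
noncomputable def S23sq (a0 a1 a2 a3 a4 θ : ℝ) : ℝ :=
  1 - 4 * a0 ^ 2 * a2 ^ 2 - 4 * a0 ^ 2 * a3 ^ 2 + 8 * a1 ^ 2 * a4 ^ 2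
    + 8 * a2 ^ 2 * a3 ^ 2 - 16 * a1 * a2 * a3 * a4 * Real.cos θ

/-- Partial tangle τ₁₂ = 2α₀√(α₃²+α₄²). -/
noncomputable def tau12 (a0 a1 a2 a3 a4 θ : ℝ) : ℝ :=
  2 * a0 * Real.sqrt (a3 ^ 2 + a4 ^ 2)

/-- Partial tangle τ₁₃ = 2α₀√(α₂²+α₄²). -/
noncomputable def tau13 (a0 a1 a2 a3 a4 θ : ℝ) : ℝ :=
  2 * a0 * Real.sqrt (a2 ^ 2 + a4 ^ 2)

/-- Partial tangle τ₂₃ = 2√(α₀²α₄²+α₁²α₄²+α₂²α₃²−2α₁α₂α₃α₄cosθ). -/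
noncomputable def tau23 (a0 a1 a2 a3 a4 θ : ℝ) : ℝ :=
  2 * Real.sqrt (a0 ^ 2 * a4 ^ 2 + a1 ^ 2 * a4 ^ 2 + a2 ^ 2 * a3 ^ 2
    - 2 * a1 * a2 * a3 * a4 * Real.cos θ)

/-- Average teleportation fidelity f(ρ₁₂), determined by τ₁₂ = 3f(ρ₁₂) − 2. -/
noncomputable def fid12 (a0 a1 a2 a3 a4 θ : ℝ) : ℝ := (tau12 a0 a1 a2 a3 a4 θ + 2) / 3

/-- Average teleportation fidelity f(ρ₁₃), determined by τ₁₃ = 3f(ρ₁₃) − 2. -/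
noncomputable def fid13 (a0 a1 a2 a3 a4 θ : ℝ) : ℝ := (tau13 a0 a1 a2 a3 a4 θ + 2) / 3

/-- Average teleportation fidelity f(ρ₂₃), determined by τ₂₃ = 3f(ρ₂₃) − 2. -/
noncomputable def fid23 (a0 a1 a2 a3 a4 θ : ℝ) : ℝ := (tau23 a0 a1 a2 a3 a4 θ + 2) / 3

set_option maxHeartbeats 1000000 in
/-- For a three-qubit pure state α₀|000⟩ + α₁e^{iθ}|100⟩ + α₂|101⟩ + α₃|110⟩ + α₄|111⟩:
the exact identity
S₁₂² + S₁₃² + τ₂₃² = 3 − (2α₀²−1)² − 4α₀²α₁² − 4(α₁α₄−α₂α₃)² − 8α₁α₂α₃α₄(1−cosθ)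
holds; consequently S₁₂² + S₁₃² + [3f(ρ₂₃)−2]² ≤ 3, and by symmetry
S₁₂² + S₂₃² + [3f(ρ₁₃)−2]² ≤ 3 and S₁₃² + S₂₃² + [3f(ρ₁₂)−2]² ≤ 3. -/
theorem stmt14 (a0 a1 a2 a3 a4 θ : ℝ)
    (h0 : 0 ≤ a0) (h1 : 0 ≤ a1) (h2 : 0 ≤ a2) (h3 : 0 ≤ a3) (h4 : 0 ≤ a4)
    (hsum : a0 ^ 2 + a1 ^ 2 + a2 ^ 2 + a3 ^ 2 + a4 ^ 2 = 1)
    (hθ : θ ∈ Set.Icc 0 Real.pi) :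
    S12sq a0 a1 a2 a3 a4 θ + S13sq a0 a1 a2 a3 a4 θ + tau23 a0 a1 a2 a3 a4 θ ^ 2
        = 3 - (2 * a0 ^ 2 - 1) ^ 2 - 4 * a0 ^ 2 * a1 ^ 2 - 4 * (a1 * a4 - a2 * a3) ^ 2
          - 8 * a1 * a2 * a3 * a4 * (1 - Real.cos θ) ∧
    S12sq a0 a1 a2 a3 a4 θ + S13sq a0 a1 a2 a3 a4 θ
        + (3 * fid23 a0 a1 a2 a3 a4 θ - 2) ^ 2 ≤ 3 ∧
    S12sq a0 a1 a2 a3 a4 θ + S23sq a0 a1 a2 a3 a4 θ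
        + (3 * fid13 a0 a1 a2 a3 a4 θ - 2) ^ 2 ≤ 3 ∧
    S13sq a0 a1 a2 a3 a4 θ + S23sq a0 a1 a2 a3 a4 θ
        + (3 * fid12 a0 a1 a2 a3 a4 θ - 2) ^ 2 ≤ 3 := by
  obtain ⟨hθ0, hθπ⟩ := hθ
  have hcos1 : Real.cos θ ≤ 1 := Real.cos_le_one θ
  have hcosm : -1 ≤ Real.cos θ := Real.neg_one_le_cos θ
  have hC : 0 ≤ a1 * a2 * a3 * a4 := by positivity
  have hX : 0 ≤ a0 ^ 2 * a4 ^ 2 + a1 ^ 2 * a4 ^ 2 + a2 ^ 2 * a3 ^ 2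
      - 2 * a1 * a2 * a3 * a4 * Real.cos θ := by
    nlinarith [sq_nonneg (a1 * a4 - a2 * a3), sq_nonneg (a0 * a4),
      mul_nonneg hC (sub_nonneg.mpr hcos1)]
  have ht23 : tau23 a0 a1 a2 a3 a4 θ ^ 2 = 4 * (a0 ^ 2 * a4 ^ 2 + a1 ^ 2 * a4 ^ 2
      + a2 ^ 2 * a3 ^ 2 - 2 * a1 * a2 * a3 * a4 * Real.cos θ) := by
    rw [tau23, mul_pow, Real.sq_sqrt hX]; ring
  have ht12 : tau12 a0 a1 a2 a3 a4 θ ^ 2 = 4 * a0 ^ 2 * (a3 ^ 2 + a4 ^ 2) := by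
    rw [tau12, mul_pow, mul_pow, Real.sq_sqrt (by positivity)]; ring
  have ht13 : tau13 a0 a1 a2 a3 a4 θ ^ 2 = 4 * a0 ^ 2 * (a2 ^ 2 + a4 ^ 2) := by
    rw [tau13, mul_pow, mul_pow, Real.sq_sqrt (by positivity)]; ring
  have hf23 : (3 * fid23 a0 a1 a2 a3 a4 θ - 2) = tau23 a0 a1 a2 a3 a4 θ := by
    rw [fid23]; ring
  have hf13 : (3 * fid13 a0 a1 a2 a3 a4 θ - 2) = tau13 a0 a1 a2 a3 a4 θ := by
    rw [fid13]; ring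
  have hf12 : (3 * fid12 a0 a1 a2 a3 a4 θ - 2) = tau12 a0 a1 a2 a3 a4 θ := by
    rw [fid12]; ring
  have hid : S12sq a0 a1 a2 a3 a4 θ + S13sq a0 a1 a2 a3 a4 θ + tau23 a0 a1 a2 a3 a4 θ ^ 2
      = 3 - (2 * a0 ^ 2 - 1) ^ 2 - 4 * a0 ^ 2 * a1 ^ 2 - 4 * (a1 * a4 - a2 * a3) ^ 2
        - 8 * a1 * a2 * a3 * a4 * (1 - Real.cos θ) := by
    rw [ht23, S12sq, S13sq]
    linear_combination (4 * a0 ^ 2) * hsum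
  refine ⟨hid, ?_, ?_, ?_⟩
  · rw [hf23, hid]
    have hb : (0:ℝ) ≤ a0 ^ 2 * a1 ^ 2 := by positivity
    linarith [sq_nonneg (2 * a0 ^ 2 - 1), sq_nonneg (a1 * a4 - a2 * a3),
      mul_nonneg hC (sub_nonneg.mpr hcos1), hb]
  · rw [hf13, ht13, S12sq, S23sq]
    nlinarith [sq_nonneg (a0 ^ 2 + a1 ^ 2 + a2 ^ 2 - a3 ^ 2 - a4 ^ 2), sq_nonneg (a0 * a2),
      sq_nonneg (a1 * a3 - a2 * a4), mul_nonneg hC (by linarith : (0:ℝ) ≤ 1 + Real.cos θ)]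
  · rw [hf12, ht12, S13sq, S23sq]
    nlinarith [sq_nonneg (a0 ^ 2 + a1 ^ 2 + a3 ^ 2 - a2 ^ 2 - a4 ^ 2), sq_nonneg (a0 * a3),
      sq_nonneg (a1 * a2 - a3 * a4), mul_nonneg hC (by linarith : (0:ℝ) ≤ 1 + Real.cos θ)]
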